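/- Let G be Q_m or D_m with m even, with α₂ = Σ_{g∈⟨a⟩} x_{g^{-1}} g − Σ_{g∈G\⟨a⟩} x_g g, α₃ = Σ_{g∈G} χ₃(g) x_g g, α₄ = Σ_{g∈⟨a⟩} χ₄(g) x_{g^{-1}} g + Σ_{g∈G\⟨a⟩} χ₄(g) x_g g. Then [α₂, α₃ + α₄] = 0 and [α₃, α₁ + α₂] = 0 and [α₄, α₁ + α₂] = 0 in C[G], where α₁ = Σ_{g∈G} x_g g. -/

import Mathlib

section Helpers

lemma comm_of_forall_of {G : Type*} [Monoid G] (z : MonoidAlgebra ℂ G)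
    (h : ∀ g : G, z * MonoidAlgebra.of ℂ G g = MonoidAlgebra.of ℂ G g * z)
    (w : MonoidAlgebra ℂ G) : z * w = w * z := by
  induction w using MonoidAlgebra.induction_on with
  | of g => exact h g
  | add f g hf hg => rw [mul_add, add_mul, hf, hg]
  | smul r f hf => rw [mul_smul_comm, smul_mul_assoc, hf]

def dEquiv (m : ℕ) : ZMod m ⊕ ZMod m ≃ DihedralGroup m where
  toFun := Sum.elim DihedralGroup.r DihedralGroup.sr
  invFun g := match g with | .r k => .inl k | .sr k => .inr k
  left_inv := by rintro (k | k) <;> rfl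
  right_inv := by rintro (k | k) <;> rfl

def qEquiv (m : ℕ) : ZMod (2 * m) ⊕ ZMod (2 * m) ≃ QuaternionGroup m where
  toFun := Sum.elim QuaternionGroup.a QuaternionGroup.xa
  invFun g := match g with | .a k => .inl k | .xa k => .inr k
  left_inv := by rintro (k | k) <;> rfl
  right_inv := by rintro (k | k) <;> rfl

lemma dsum {m : ℕ} [NeZero m] {A : Type*} [AddCommMonoid A] (F : DihedralGroup m → A) :
    ∑ g, F g = (∑ k : ZMod m, F (.r k)) + ∑ k : ZMod m, F (.sr k) := by
  rw [← Fintype.sum_equiv (dEquiv m) (fun s => F (dEquiv m s)) F (fun s => rfl)]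
  exact Fintype.sum_sum_type _

lemma qsum {m : ℕ} [NeZero m] {A : Type*} [AddCommMonoid A] (F : QuaternionGroup m → A) :
    ∑ g, F g = (∑ k : ZMod (2 * m), F (.a k)) + ∑ k : ZMod (2 * m), F (.xa k) := by
  rw [← Fintype.sum_equiv (qEquiv m) (fun s => F (qEquiv m s)) F (fun s => rfl)]
  exact Fintype.sum_sum_type _

lemma d_central {m : ℕ} [NeZero m] (f : ZMod m → ℂ) (hf : ∀ k, f (-k) = f k)
    (w : MonoidAlgebra ℂ (DihedralGroup m)) :
    (∑ k : ZMod m, MonoidAlgebra.single (DihedralGroup.r k) (f k)) * w =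
      w * ∑ k : ZMod m, MonoidAlgebra.single (DihedralGroup.r k) (f k) := by
  apply comm_of_forall_of
  rintro (j | j) <;>
    rw [MonoidAlgebra.of_apply, Finset.sum_mul, Finset.mul_sum] <;>
    simp only [MonoidAlgebra.single_mul_single, one_mul, mul_one, DihedralGroup.r_mul_r,
      DihedralGroup.r_mul_sr, DihedralGroup.sr_mul_r]
  · exact Finset.sum_congr rfl fun k _ => by rw [add_comm]
  · exact Fintype.sum_equiv (Equiv.neg (ZMod m)) _ _
      (fun k => by simp [sub_neg_eq_add, sub_eq_add_neg, hf, add_comm])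

lemma q_central {m : ℕ} [NeZero m] (f : ZMod (2 * m) → ℂ) (hf : ∀ k, f (-k) = f k)
    (w : MonoidAlgebra ℂ (QuaternionGroup m)) :
    (∑ k : ZMod (2 * m), MonoidAlgebra.single (QuaternionGroup.a k) (f k)) * w =
      w * ∑ k : ZMod (2 * m), MonoidAlgebra.single (QuaternionGroup.a k) (f k) := by
  apply comm_of_forall_of
  rintro (j | j) <;>
    rw [MonoidAlgebra.of_apply, Finset.sum_mul, Finset.mul_sum] <;>
    simp only [MonoidAlgebra.single_mul_single, one_mul, mul_one, QuaternionGroup.a_mul_a,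
      QuaternionGroup.a_mul_xa, QuaternionGroup.xa_mul_a]
  · exact Finset.sum_congr rfl fun k _ => by rw [add_comm]
  · exact Fintype.sum_equiv (Equiv.neg (ZMod (2 * m))) _ _
      (fun k => by simp [sub_neg_eq_add, sub_eq_add_neg, hf, add_comm])

lemma neg_one_pow_neg_val {m : ℕ} [NeZero m] (hm : Even m) (k : ZMod m) :
    (-1 : ℂ) ^ (-k).val = (-1 : ℂ) ^ k.val := by
  rcases eq_or_ne k 0 with rfl | hk
  · simp
  · rw [ZMod.neg_val, if_neg hk]
    have h1 : (-1 : ℂ) ^ (m - k.val) * (-1 : ℂ) ^ k.val = 1 := by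
      rw [← pow_add, Nat.sub_add_cancel (ZMod.val_lt k).le]
      exact hm.neg_one_pow
    have h2 : (-1 : ℂ) ^ k.val * (-1 : ℂ) ^ k.val = 1 := by
      rw [← pow_add]
      exact Even.neg_one_pow ⟨k.val, rfl⟩
    calc (-1 : ℂ) ^ (m - k.val)
        = (-1 : ℂ) ^ (m - k.val) * ((-1 : ℂ) ^ k.val * (-1 : ℂ) ^ k.val) := by rw [h2, mul_one]
      _ = ((-1 : ℂ) ^ (m - k.val) * (-1 : ℂ) ^ k.val) * (-1 : ℂ) ^ k.val := by ring
      _ = (-1 : ℂ) ^ k.val := by rw [h1, one_mul]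

end Helpers



/-- `α₁ = Σ_{g∈G} x_g g` for `D_m`. -/
noncomputable def dihedralAlpha1 (m : ℕ) [NeZero m] (x : DihedralGroup m → ℂ) :
    MonoidAlgebra ℂ (DihedralGroup m) :=
  ∑ g : DihedralGroup m, MonoidAlgebra.single g (x g)

/-- `α₂ = Σ_{g∈⟨a⟩} x_{g⁻¹} g − Σ_{g∈G∖⟨a⟩} x_g g` for `D_m`. -/
noncomputable def dihedralAlpha2 (m : ℕ) [NeZero m] (x : DihedralGroup m → ℂ) :
    MonoidAlgebra ℂ (DihedralGroup m) :=
  (∑ k : ZMod m, MonoidAlgebra.single (DihedralGroup.r k) (x ((DihedralGroup.r k)⁻¹))) -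
  ∑ k : ZMod m, MonoidAlgebra.single (DihedralGroup.sr k) (x (DihedralGroup.sr k))

/-- `α₃ = Σ_g χ₃(g) x_g g` for `D_m`, where `χ₃(a^k) = (−1)^k`, `χ₃(a^k b) = (−1)^k c₃`
with `c₃ = χ₃(b)`. -/
noncomputable def dihedralAlpha3 (m : ℕ) [NeZero m] (c₃ : ℂ) (x : DihedralGroup m → ℂ) :
    MonoidAlgebra ℂ (DihedralGroup m) :=
  (∑ k : ZMod m, MonoidAlgebra.single (DihedralGroup.r k)
      ((-1 : ℂ) ^ k.val * x (DihedralGroup.r k))) +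
  ∑ k : ZMod m, MonoidAlgebra.single (DihedralGroup.r k * DihedralGroup.sr 0)
      ((-1 : ℂ) ^ k.val * c₃ * x (DihedralGroup.r k * DihedralGroup.sr 0))

/-- `α₄ = Σ_{g∈⟨a⟩} χ₄(g) x_{g⁻¹} g + Σ_{g∉⟨a⟩} χ₄(g) x_g g` for `D_m`, where
`χ₄(a^k) = (−1)^k`, `χ₄(a^k b) = (−1)^k c₄` with `c₄ = χ₄(b)`. -/
noncomputable def dihedralAlpha4 (m : ℕ) [NeZero m] (c₄ : ℂ) (x : DihedralGroup m → ℂ) :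
    MonoidAlgebra ℂ (DihedralGroup m) :=
  (∑ k : ZMod m, MonoidAlgebra.single (DihedralGroup.r k)
      ((-1 : ℂ) ^ k.val * x ((DihedralGroup.r k)⁻¹))) +
  ∑ k : ZMod m, MonoidAlgebra.single (DihedralGroup.r k * DihedralGroup.sr 0)
      ((-1 : ℂ) ^ k.val * c₄ * x (DihedralGroup.r k * DihedralGroup.sr 0))

/-- `α₁ = Σ_{g∈G} x_g g` for `Q_m`. -/
noncomputable def quaternionAlpha1 (m : ℕ) [NeZero m] (x : QuaternionGroup m → ℂ) :
    MonoidAlgebra ℂ (QuaternionGroup m) :=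
  ∑ g : QuaternionGroup m, MonoidAlgebra.single g (x g)

/-- `α₂ = Σ_{g∈⟨a⟩} x_{g⁻¹} g − Σ_{g∈G∖⟨a⟩} x_g g` for `Q_m`. -/
noncomputable def quaternionAlpha2 (m : ℕ) [NeZero m] (x : QuaternionGroup m → ℂ) :
    MonoidAlgebra ℂ (QuaternionGroup m) :=
  (∑ k : ZMod (2 * m),
      MonoidAlgebra.single (QuaternionGroup.a k) (x ((QuaternionGroup.a k)⁻¹))) -
  ∑ k : ZMod (2 * m), MonoidAlgebra.single (QuaternionGroup.xa k) (x (QuaternionGroup.xa k))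

/-- `α₃ = Σ_g χ₃(g) x_g g` for `Q_m`, where `χ₃(a^k) = (−1)^k`, `χ₃(a^k b) = (−1)^k c₃`. -/
noncomputable def quaternionAlpha3 (m : ℕ) [NeZero m] (c₃ : ℂ) (x : QuaternionGroup m → ℂ) :
    MonoidAlgebra ℂ (QuaternionGroup m) :=
  (∑ k : ZMod (2 * m), MonoidAlgebra.single (QuaternionGroup.a k)
      ((-1 : ℂ) ^ k.val * x (QuaternionGroup.a k))) +
  ∑ k : ZMod (2 * m), MonoidAlgebra.single (QuaternionGroup.a k * QuaternionGroup.xa 0)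
      ((-1 : ℂ) ^ k.val * c₃ * x (QuaternionGroup.a k * QuaternionGroup.xa 0))

/-- `α₄ = Σ_{g∈⟨a⟩} χ₄(g) x_{g⁻¹} g + Σ_{g∉⟨a⟩} χ₄(g) x_g g` for `Q_m`, where
`χ₄(a^k) = (−1)^k`, `χ₄(a^k b) = (−1)^k c₄`. -/
noncomputable def quaternionAlpha4 (m : ℕ) [NeZero m] (c₄ : ℂ) (x : QuaternionGroup m → ℂ) :
    MonoidAlgebra ℂ (QuaternionGroup m) :=
  (∑ k : ZMod (2 * m), MonoidAlgebra.single (QuaternionGroup.a k)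
      ((-1 : ℂ) ^ k.val * x ((QuaternionGroup.a k)⁻¹))) +
  ∑ k : ZMod (2 * m), MonoidAlgebra.single (QuaternionGroup.a k * QuaternionGroup.xa 0)
      ((-1 : ℂ) ^ k.val * c₄ * x (QuaternionGroup.a k * QuaternionGroup.xa 0))

section AlphaRewrites

lemma d12 {m : ℕ} [NeZero m] (x : DihedralGroup m → ℂ) :
    dihedralAlpha1 m x + dihedralAlpha2 m x =
      ∑ k : ZMod m, MonoidAlgebra.single (DihedralGroup.r k)
        (x (DihedralGroup.r k) + x (DihedralGroup.r (-k))) := by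
  rw [dihedralAlpha1, dihedralAlpha2, dsum]
  have hinv : ∀ k : ZMod m, (DihedralGroup.r k)⁻¹ = DihedralGroup.r (-k) := fun _ => rfl
  simp only [hinv]
  have hsplit : (∑ k : ZMod m, MonoidAlgebra.single (DihedralGroup.r k)
        (x (DihedralGroup.r k) + x (DihedralGroup.r (-k)))) =
      (∑ k : ZMod m, MonoidAlgebra.single (DihedralGroup.r k) (x (DihedralGroup.r k))) +
        ∑ k : ZMod m, MonoidAlgebra.single (DihedralGroup.r k) (x (DihedralGroup.r (-k))) := by
    rw [← Finset.sum_add_distrib]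
    exact Finset.sum_congr rfl fun k _ => MonoidAlgebra.single_add _ _ _
  rw [hsplit]
  abel

lemma q12 {m : ℕ} [NeZero m] (y : QuaternionGroup m → ℂ) :
    quaternionAlpha1 m y + quaternionAlpha2 m y =
      ∑ k : ZMod (2 * m), MonoidAlgebra.single (QuaternionGroup.a k)
        (y (QuaternionGroup.a k) + y (QuaternionGroup.a (-k))) := by
  rw [quaternionAlpha1, quaternionAlpha2, qsum]
  have hinv : ∀ k : ZMod (2 * m), (QuaternionGroup.a k)⁻¹ = QuaternionGroup.a (-k) :=
    fun _ => rfl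
  simp only [hinv]
  have hsplit : (∑ k : ZMod (2 * m), MonoidAlgebra.single (QuaternionGroup.a k)
        (y (QuaternionGroup.a k) + y (QuaternionGroup.a (-k)))) =
      (∑ k : ZMod (2 * m), MonoidAlgebra.single (QuaternionGroup.a k)
        (y (QuaternionGroup.a k))) +
        ∑ k : ZMod (2 * m), MonoidAlgebra.single (QuaternionGroup.a k)
          (y (QuaternionGroup.a (-k))) := by
    rw [← Finset.sum_add_distrib]
    exact Finset.sum_congr rfl fun k _ => MonoidAlgebra.single_add _ _ _
  rw [hsplit]
  abel

lemma d34 {m : ℕ} [NeZero m] (c : ℂ) (x : DihedralGroup m → ℂ) :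
    dihedralAlpha3 m c x + dihedralAlpha4 m (-c) x =
      ∑ k : ZMod m, MonoidAlgebra.single (DihedralGroup.r k)
        ((-1 : ℂ) ^ k.val * (x (DihedralGroup.r k) + x (DihedralGroup.r (-k)))) := by
  rw [dihedralAlpha3, dihedralAlpha4]
  have hinv : ∀ k : ZMod m, (DihedralGroup.r k)⁻¹ = DihedralGroup.r (-k) := fun _ => rfl
  simp only [hinv]
  have hB : (∑ k : ZMod m, MonoidAlgebra.single (DihedralGroup.r k * DihedralGroup.sr 0)
        ((-1 : ℂ) ^ k.val * (-c) * x (DihedralGroup.r k * DihedralGroup.sr 0))) =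
      - ∑ k : ZMod m, MonoidAlgebra.single (DihedralGroup.r k * DihedralGroup.sr 0)
        ((-1 : ℂ) ^ k.val * c * x (DihedralGroup.r k * DihedralGroup.sr 0)) := by
    rw [← Finset.sum_neg_distrib]
    refine Finset.sum_congr rfl fun k _ => ?_
    rw [show (-1 : ℂ) ^ k.val * (-c) * x (DihedralGroup.r k * DihedralGroup.sr 0) =
      -((-1 : ℂ) ^ k.val * c * x (DihedralGroup.r k * DihedralGroup.sr 0)) from by ring]
    exact MonoidAlgebra.single_neg _ _
  rw [hB]
  have hsplit : (∑ k : ZMod m, MonoidAlgebra.single (DihedralGroup.r k)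
        ((-1 : ℂ) ^ k.val * (x (DihedralGroup.r k) + x (DihedralGroup.r (-k))))) =
      (∑ k : ZMod m, MonoidAlgebra.single (DihedralGroup.r k)
        ((-1 : ℂ) ^ k.val * x (DihedralGroup.r k))) +
        ∑ k : ZMod m, MonoidAlgebra.single (DihedralGroup.r k)
          ((-1 : ℂ) ^ k.val * x (DihedralGroup.r (-k))) := by
    rw [← Finset.sum_add_distrib]
    refine Finset.sum_congr rfl fun k _ => ?_
    rw [mul_add]
    exact MonoidAlgebra.single_add _ _ _
  rw [hsplit]
  abel

lemma q34 {m : ℕ} [NeZero m] (c : ℂ) (y : QuaternionGroup m → ℂ) :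
    quaternionAlpha3 m c y + quaternionAlpha4 m (-c) y =
      ∑ k : ZMod (2 * m), MonoidAlgebra.single (QuaternionGroup.a k)
        ((-1 : ℂ) ^ k.val * (y (QuaternionGroup.a k) + y (QuaternionGroup.a (-k)))) := by
  rw [quaternionAlpha3, quaternionAlpha4]
  have hinv : ∀ k : ZMod (2 * m), (QuaternionGroup.a k)⁻¹ = QuaternionGroup.a (-k) :=
    fun _ => rfl
  simp only [hinv]
  have hB : (∑ k : ZMod (2 * m),
        MonoidAlgebra.single (QuaternionGroup.a k * QuaternionGroup.xa 0)
        ((-1 : ℂ) ^ k.val * (-c) * y (QuaternionGroup.a k * QuaternionGroup.xa 0))) =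
      - ∑ k : ZMod (2 * m),
        MonoidAlgebra.single (QuaternionGroup.a k * QuaternionGroup.xa 0)
        ((-1 : ℂ) ^ k.val * c * y (QuaternionGroup.a k * QuaternionGroup.xa 0)) := by
    rw [← Finset.sum_neg_distrib]
    refine Finset.sum_congr rfl fun k _ => ?_
    rw [show (-1 : ℂ) ^ k.val * (-c) * y (QuaternionGroup.a k * QuaternionGroup.xa 0) =
      -((-1 : ℂ) ^ k.val * c * y (QuaternionGroup.a k * QuaternionGroup.xa 0)) from by ring]
    exact MonoidAlgebra.single_neg _ _
  rw [hB]
  have hsplit : (∑ k : ZMod (2 * m), MonoidAlgebra.single (QuaternionGroup.a k)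
        ((-1 : ℂ) ^ k.val * (y (QuaternionGroup.a k) + y (QuaternionGroup.a (-k))))) =
      (∑ k : ZMod (2 * m), MonoidAlgebra.single (QuaternionGroup.a k)
        ((-1 : ℂ) ^ k.val * y (QuaternionGroup.a k))) +
        ∑ k : ZMod (2 * m), MonoidAlgebra.single (QuaternionGroup.a k)
          ((-1 : ℂ) ^ k.val * y (QuaternionGroup.a (-k))) := by
    rw [← Finset.sum_add_distrib]
    refine Finset.sum_congr rfl fun k _ => ?_
    rw [mul_add]
    exact MonoidAlgebra.single_add _ _ _
  rw [hsplit]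
  abel

end AlphaRewrites

/-- For `G = Q_m` (or `D_m` with `m` even): `[α₂, α₃ + α₄] = 0`, `[α₃, α₁ + α₂] = 0` and
`[α₄, α₁ + α₂] = 0` in `ℂ[G]`. -/
theorem commutator_identities_alpha (m : ℕ) [NeZero m]
    (x : DihedralGroup m → ℂ) (y : QuaternionGroup m → ℂ) :
    (Even m →
      (dihedralAlpha2 m x * (dihedralAlpha3 m 1 x + dihedralAlpha4 m (-1) x) -
        (dihedralAlpha3 m 1 x + dihedralAlpha4 m (-1) x) * dihedralAlpha2 m x = 0) ∧
      (dihedralAlpha3 m 1 x * (dihedralAlpha1 m x + dihedralAlpha2 m x) -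
        (dihedralAlpha1 m x + dihedralAlpha2 m x) * dihedralAlpha3 m 1 x = 0) ∧
      (dihedralAlpha4 m (-1) x * (dihedralAlpha1 m x + dihedralAlpha2 m x) -
        (dihedralAlpha1 m x + dihedralAlpha2 m x) * dihedralAlpha4 m (-1) x = 0)) ∧
    (Odd m →
      (quaternionAlpha2 m y *
          (quaternionAlpha3 m Complex.I y + quaternionAlpha4 m (-Complex.I) y) -
        (quaternionAlpha3 m Complex.I y + quaternionAlpha4 m (-Complex.I) y) *
          quaternionAlpha2 m y = 0) ∧
      (quaternionAlpha3 m Complex.I y * (quaternionAlpha1 m y + quaternionAlpha2 m y) -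
        (quaternionAlpha1 m y + quaternionAlpha2 m y) * quaternionAlpha3 m Complex.I y = 0) ∧
      (quaternionAlpha4 m (-Complex.I) y * (quaternionAlpha1 m y + quaternionAlpha2 m y) -
        (quaternionAlpha1 m y + quaternionAlpha2 m y) *
          quaternionAlpha4 m (-Complex.I) y = 0)) ∧
    (Even m →
      (quaternionAlpha2 m y * (quaternionAlpha3 m 1 y + quaternionAlpha4 m (-1) y) -
        (quaternionAlpha3 m 1 y + quaternionAlpha4 m (-1) y) * quaternionAlpha2 m y = 0) ∧
      (quaternionAlpha3 m 1 y * (quaternionAlpha1 m y + quaternionAlpha2 m y) -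
        (quaternionAlpha1 m y + quaternionAlpha2 m y) * quaternionAlpha3 m 1 y = 0) ∧
      (quaternionAlpha4 m (-1) y * (quaternionAlpha1 m y + quaternionAlpha2 m y) -
        (quaternionAlpha1 m y + quaternionAlpha2 m y) * quaternionAlpha4 m (-1) y = 0)) := by
  haveI : NeZero (2 * m) := ⟨Nat.mul_ne_zero two_ne_zero (NeZero.ne m)⟩
  have hq : Even (2 * m) := even_two_mul m
  have hfd12 : ∀ k : ZMod m,
      (fun k => x (DihedralGroup.r k) + x (DihedralGroup.r (-k))) (-k) =
      (fun k => x (DihedralGroup.r k) + x (DihedralGroup.r (-k))) k := fun k => by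
    simp only [neg_neg]
    exact add_comm _ _
  have hfq12 : ∀ k : ZMod (2 * m),
      (fun k => y (QuaternionGroup.a k) + y (QuaternionGroup.a (-k))) (-k) =
      (fun k => y (QuaternionGroup.a k) + y (QuaternionGroup.a (-k))) k := fun k => by
    simp only [neg_neg]
    exact add_comm _ _
  have hfq34 : ∀ k : ZMod (2 * m),
      (fun k => (-1 : ℂ) ^ k.val *
        (y (QuaternionGroup.a k) + y (QuaternionGroup.a (-k)))) (-k) =
      (fun k => (-1 : ℂ) ^ k.val *
        (y (QuaternionGroup.a k) + y (QuaternionGroup.a (-k)))) k := fun k => by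
    simp only [neg_neg, neg_one_pow_neg_val hq]
    rw [add_comm (y (QuaternionGroup.a (-k)))]
  refine ⟨fun hm => ⟨?_, ?_, ?_⟩, fun _ => ⟨?_, ?_, ?_⟩, fun _ => ⟨?_, ?_, ?_⟩⟩
  · have hfd34 : ∀ k : ZMod m,
        (fun k => (-1 : ℂ) ^ k.val *
          (x (DihedralGroup.r k) + x (DihedralGroup.r (-k)))) (-k) =
        (fun k => (-1 : ℂ) ^ k.val *
          (x (DihedralGroup.r k) + x (DihedralGroup.r (-k)))) k := fun k => by
      simp only [neg_neg, neg_one_pow_neg_val hm]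
      rw [add_comm (x (DihedralGroup.r (-k)))]
    rw [d34 (1 : ℂ) x, d_central _ hfd34 (dihedralAlpha2 m x), sub_self]
  · rw [d12 x, d_central _ hfd12 (dihedralAlpha3 m 1 x), sub_self]
  · rw [d12 x, d_central _ hfd12 (dihedralAlpha4 m (-1) x), sub_self]
  · rw [q34 Complex.I y, q_central _ hfq34 (quaternionAlpha2 m y), sub_self]
  · rw [q12 y, q_central _ hfq12 (quaternionAlpha3 m Complex.I y), sub_self]
  · rw [q12 y, q_central _ hfq12 (quaternionAlpha4 m (-Complex.I) y), sub_self]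
  · rw [q34 (1 : ℂ) y, q_central _ hfq34 (quaternionAlpha2 m y), sub_self]
  · rw [q12 y, q_central _ hfq12 (quaternionAlpha3 m 1 y), sub_self]
  · rw [q12 y, q_central _ hfq12 (quaternionAlpha4 m (-1) y), sub_self]
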